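/- Fix 1 ≤ m ≤ M, an integer ℓ with |ℓ| ≤ (log y)/2, and a nonnegative integer n_m, and let t ∈ ℝ be such that |Re D_{m,ℓ}(t)| ∈ I_{n_m}^{(m)}. Then R_{m,ℓ}(t)^{1/(k−1)} ≤ (1 + C e^{−J_m}) U_{m,ℓ}(t) for an absolute constant C > 0. -/

import Mathlib

open MeasureTheory Finset

/-- The Dirichlet polynomial
`D_{m,ℓ}(t) = ∑_{y_{m-1} < p ≤ y_m} ( p^{-1/2-it-iℓ/log y} + (1/2) p^{-1-2it-2iℓ/log y} )`,
where `Y : ℕ → ℝ` is the subdivision `y₀ < y₁ < ⋯ < y_M` of `[1, y]`. -/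
noncomputable def Dpoly (y : ℝ) (Y : ℕ → ℝ) (m : ℕ) (l : ℤ) (t : ℝ) : ℂ :=
  ∑ p ∈ (Finset.Icc 1 ⌊Y m⌋₊).filter (fun p => Nat.Prime p ∧ Y (m - 1) < (p : ℝ)),
    ((p : ℂ) ^ (-(1/2 : ℂ) - Complex.I * (t : ℂ) - Complex.I * (l : ℂ) / (Real.log y : ℂ))
      + (1/2) * (p : ℂ) ^ (-(1 : ℂ) - 2 * Complex.I * (t : ℂ)
          - 2 * Complex.I * (l : ℂ) / (Real.log y : ℂ)))

/-- The truncated exponential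
`R_{m,ℓ}(t) = ( ∑_{j=0}^{J_m} ((k-1)^j/j!) (Re D_{m,ℓ}(t))^j )²`. -/
noncomputable def Rml (k y : ℝ) (Y : ℕ → ℝ) (J : ℕ → ℕ) (m : ℕ) (l : ℤ) (t : ℝ) : ℝ :=
  (∑ j ∈ Finset.range (J m + 1),
    (k - 1) ^ j / (Nat.factorial j : ℝ) * (Dpoly y Y m l t).re ^ j) ^ 2

/-- The interval `I_n^{(m)}`: `I₀^{(m)} = [0, J_m/(100k)]` and
`I_n^{(m)} = [2^{n-1} J_m/(100k), 2^n J_m/(100k)]` for `n ≥ 1`. -/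
noncomputable def Iset (k : ℝ) (J : ℕ → ℕ) (m : ℕ) (n : ℕ) : Set ℝ :=
  if n = 0 then Set.Icc 0 ((J m : ℝ) / (100 * k))
  else Set.Icc (2 ^ (n - 1) * (J m : ℝ) / (100 * k)) (2 ^ n * (J m : ℝ) / (100 * k))

/-- The majorant `U_{m,ℓ}(t)`, defined case-by-case according to whether `n_m = 0`,
`J_m/(100k) ≤ A_m ≤ 100 k J_m`, or `A_m ≥ 100 k J_m`, where `A_m = inf I_{n_m}^{(m)}`
and `a_m = 2⌈200 k J_m⌉`. -/
noncomputable def Uml (k y : ℝ) (Y : ℕ → ℝ) (J : ℕ → ℕ) (m : ℕ) (nm : ℕ) (l : ℤ)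
    (t : ℝ) : ℝ :=
  let A : ℝ := sInf (Iset k J m nm)
  let a : ℕ := 2 * ⌈200 * k * (J m : ℝ)⌉₊
  if nm = 0 then
    (∑ j ∈ Finset.range (J m + 1), (Dpoly y Y m l t).re ^ j / (Nat.factorial j : ℝ)) ^ 2
  else if A ≤ 100 * k * (J m : ℝ) then
    Real.exp (4 * A) * ‖Dpoly y Y m l t / (A : ℂ)‖ ^ a
  else
    (2 * (2 * (k - 1) * A) ^ (J m) / (Nat.factorial (J m) : ℝ)) ^ ((2:ℝ) / (k - 1))
      * ‖Dpoly y Y m l t / (A : ℂ)‖ ^ a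

lemma pow_self_le_factorial_mul_exp (n : ℕ) :
    (n : ℝ) ^ n ≤ (Nat.factorial n : ℝ) * Real.exp 1 ^ n := by
  induction n with
  | zero => simp
  | succ n ih =>
    rcases Nat.eq_zero_or_pos n with h | h
    · subst h
      simpa using Real.one_le_exp (by norm_num : (0:ℝ) ≤ 1)
    · have hn : (0:ℝ) < n := by exact_mod_cast h
      have key : ((n:ℝ) + 1) ^ n ≤ Real.exp 1 * (n:ℝ) ^ n := by
        have h1 : (1 + 1/(n:ℝ)) ≤ Real.exp (1/(n:ℝ)) := by
          have := Real.add_one_le_exp (1/(n:ℝ)); linarith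
        have h2 : ((n:ℝ) + 1) ^ n = (n:ℝ) ^ n * (1 + 1/(n:ℝ)) ^ n := by
          rw [← mul_pow]; congr 1; field_simp
        have h3 : (1 + 1/(n:ℝ)) ^ n ≤ Real.exp (1/(n:ℝ)) ^ n := by
          apply pow_le_pow_left₀ (by positivity) h1
        have h4 : Real.exp (1/(n:ℝ)) ^ n = Real.exp 1 := by
          rw [← Real.exp_nat_mul]; congr 1; field_simp
        calc ((n:ℝ) + 1) ^ n = (n:ℝ) ^ n * (1 + 1/(n:ℝ)) ^ n := h2
          _ ≤ (n:ℝ) ^ n * Real.exp 1 := by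
              rw [← h4]; exact mul_le_mul_of_nonneg_left h3 (by positivity)
          _ = Real.exp 1 * (n:ℝ) ^ n := by ring
      calc ((n+1 : ℕ):ℝ) ^ (n+1) = ((n:ℝ) + 1) * ((n:ℝ) + 1) ^ n := by push_cast; ring
        _ ≤ ((n:ℝ) + 1) * (Real.exp 1 * (n:ℝ) ^ n) := by
            apply mul_le_mul_of_nonneg_left key (by positivity)
        _ ≤ ((n:ℝ) + 1) * (Real.exp 1 * ((Nat.factorial n : ℝ) * Real.exp 1 ^ n)) := by
            apply mul_le_mul_of_nonneg_left _ (by positivity)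
            exact mul_le_mul_of_nonneg_left ih (le_of_lt (Real.exp_pos 1))
        _ = (Nat.factorial (n+1) : ℝ) * Real.exp 1 ^ (n+1) := by
            rw [Nat.factorial_succ]; push_cast; ring

set_option maxHeartbeats 1000000 in
lemma exp_tail (w : ℝ) (J : ℕ) :
    |Real.exp w - ∑ j ∈ Finset.range (J+1), w ^ j / (Nat.factorial j : ℝ)| ≤
      |w| ^ (J+1) / (Nat.factorial (J+1) : ℝ) * Real.exp |w| := by
  have hsum : Summable (fun n : ℕ => w ^ n / (Nat.factorial n : ℝ)) :=
    Real.summable_pow_div_factorial w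
  have habs : Summable (fun n : ℕ => |w| ^ n / (Nat.factorial n : ℝ)) :=
    Real.summable_pow_div_factorial |w|
  have hexp : Real.exp w = ∑' n : ℕ, w ^ n / (Nat.factorial n : ℝ) := by
    rw [Real.exp_eq_exp_ℝ, NormedSpace.exp_eq_tsum_div]
  have hexpa : Real.exp |w| = ∑' n : ℕ, |w| ^ n / (Nat.factorial n : ℝ) := by
    rw [Real.exp_eq_exp_ℝ, NormedSpace.exp_eq_tsum_div]
  have hkey : Real.exp w - ∑ j ∈ Finset.range (J+1), w ^ j / (Nat.factorial j : ℝ)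
      = ∑' n : ℕ, w ^ (n + (J+1)) / (Nat.factorial (n + (J+1)) : ℝ) := by
    rw [hexp, ← hsum.sum_add_tsum_nat_add (J+1)]; ring
  rw [hkey]
  have hterm : ∀ n : ℕ, |w| ^ (n + (J+1)) / (Nat.factorial (n + (J+1)) : ℝ) ≤
      |w| ^ (J+1) / (Nat.factorial (J+1) : ℝ) * (|w| ^ n / (Nat.factorial n : ℝ)) := by
    intro n
    have hfle : ((Nat.factorial (J+1) : ℝ) * (Nat.factorial n : ℝ)) ≤ (Nat.factorial (n + (J+1)) : ℝ) := by
      have := Nat.factorial_mul_factorial_dvd_factorial_add (J+1) n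
      have hle := Nat.le_of_dvd (Nat.factorial_pos _) this
      rw [Nat.add_comm (J+1) n] at hle
      exact_mod_cast hle
    have h1 : |w| ^ (n + (J+1)) / (Nat.factorial (n + (J+1)) : ℝ) ≤
        |w| ^ (n + (J+1)) / ((Nat.factorial (J+1) : ℝ) * (Nat.factorial n : ℝ)) := by
      apply div_le_div_of_nonneg_left (by positivity) (by positivity) hfle
    calc |w| ^ (n + (J+1)) / (Nat.factorial (n + (J+1)) : ℝ)
        ≤ |w| ^ (n + (J+1)) / ((Nat.factorial (J+1) : ℝ) * (Nat.factorial n : ℝ)) := h1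
      _ = |w| ^ (J+1) / (Nat.factorial (J+1) : ℝ) * (|w| ^ n / (Nat.factorial n : ℝ)) := by
          rw [pow_add]; ring
  have hg : Summable (fun n : ℕ =>
      |w| ^ (J+1) / (Nat.factorial (J+1) : ℝ) * (|w| ^ n / (Nat.factorial n : ℝ))) :=
    habs.mul_left _
  have hshift : Summable (fun n : ℕ => w ^ (n + (J+1)) / (Nat.factorial (n + (J+1)) : ℝ)) :=
    (summable_nat_add_iff (J+1)).2 hsum
  calc |∑' n : ℕ, w ^ (n + (J+1)) / (Nat.factorial (n + (J+1)) : ℝ)|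
      ≤ ∑' n : ℕ, |w| ^ (n + (J+1)) / (Nat.factorial (n + (J+1)) : ℝ) := by
        simpa using norm_tsum_le_tsum_norm
          (f := fun n : ℕ => w ^ (n + (J+1)) / (Nat.factorial (n + (J+1)) : ℝ)) hshift.abs
    _ ≤ ∑' n : ℕ, |w| ^ (J+1) / (Nat.factorial (J+1) : ℝ) * (|w| ^ n / (Nat.factorial n : ℝ)) := by
        apply Summable.tsum_le_tsum hterm ((summable_nat_add_iff (J+1)).2 habs) hg
    _ = |w| ^ (J+1) / (Nat.factorial (J+1) : ℝ) * Real.exp |w| := by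
        rw [tsum_mul_left, hexpa]

lemma tail_small (J : ℕ) (w : ℝ) (hw : |w| ≤ (J:ℝ)/100) :
    |Real.exp w - ∑ j ∈ Finset.range (J+1), w ^ j / (Nat.factorial j : ℝ)| ≤
      Real.exp (-(2*(J:ℝ)+3)) * Real.exp w := by
  have hJ : (0:ℝ) < (J:ℝ) + 1 := by positivity
  have hE : (0:ℝ) < Real.exp 1 := Real.exp_pos 1
  have h0 := exp_tail w J
  have hfac : ((J:ℝ)+1) ^ (J+1) / Real.exp 1 ^ (J+1) ≤ (Nat.factorial (J+1) : ℝ) := by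
    rw [div_le_iff₀ (by positivity)]
    have := pow_self_le_factorial_mul_exp (J+1)
    push_cast at this ⊢
    linarith
  have hwb : |w| ≤ ((J:ℝ)+1)/100 := le_trans hw (by
    have : (0:ℝ) ≤ (J:ℝ) := Nat.cast_nonneg J
    linarith)
  have h1 : |w| ^ (J+1) / (Nat.factorial (J+1) : ℝ) ≤ (Real.exp 1 / 100) ^ (J+1) := by
    have hnum : |w| ^ (J+1) ≤ (((J:ℝ)+1)/100) ^ (J+1) := pow_le_pow_left₀ (abs_nonneg w) hwb _
    calc |w| ^ (J+1) / (Nat.factorial (J+1) : ℝ)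
        ≤ (((J:ℝ)+1)/100) ^ (J+1) / (((J:ℝ)+1) ^ (J+1) / Real.exp 1 ^ (J+1)) :=
          div_le_div₀ (by positivity) hnum (by positivity) hfac
      _ = (Real.exp 1 / 100) ^ (J+1) := by
          rw [← div_pow, ← div_pow]
          congr 1
          have hJne : ((J:ℝ)+1) ≠ 0 := by positivity
          have hEne : Real.exp 1 ≠ 0 := (Real.exp_pos 1).ne'
          field_simp
  have h2 : (Real.exp 1 / 100) ^ (J+1) ≤ Real.exp (-(3:ℝ)) ^ (J+1) := by
    apply pow_le_pow_left₀ (by positivity)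
    have e3 : Real.exp (-(3:ℝ)) = 1 / Real.exp 1 ^ 3 := by
      rw [Real.exp_neg]
      rw [show (3:ℝ) = ((3:ℕ):ℝ) by norm_num, ← Real.exp_one_pow]
      rw [inv_eq_one_div]
    rw [e3, div_le_div_iff₀ (by norm_num) (by positivity)]
    have h9 : Real.exp 1 < 2.7182818286 := Real.exp_one_lt_d9
    have hp : (0:ℝ) < Real.exp 1 := Real.exp_pos 1
    have h2 : Real.exp 1 ^ 2 < 7.389057 := by nlinarith
    have h4 : Real.exp 1 ^ 4 < 60 := by nlinarith [sq_nonneg (Real.exp 1)]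
    nlinarith [h4]
  have h3 : Real.exp (-(3:ℝ)) ^ (J+1) = Real.exp (((J:ℝ)+1) * (-(3:ℝ))) := by
    rw [show ((J:ℝ)+1) = (((J+1:ℕ)):ℝ) by push_cast; ring, Real.exp_nat_mul]
  have h4 : Real.exp |w| ≤ Real.exp ((J:ℝ)/50) * Real.exp w := by
    rw [← Real.exp_add]
    apply Real.exp_le_exp.2
    have := neg_abs_le w
    linarith
  calc |Real.exp w - ∑ j ∈ Finset.range (J+1), w ^ j / (Nat.factorial j : ℝ)|
      ≤ |w| ^ (J+1) / (Nat.factorial (J+1) : ℝ) * Real.exp |w| := h0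
    _ ≤ Real.exp (((J:ℝ)+1) * (-(3:ℝ))) * (Real.exp ((J:ℝ)/50) * Real.exp w) := by
        apply mul_le_mul (by rw [← h3]; exact le_trans h1 h2) h4 (Real.exp_pos _).le
          (Real.exp_pos _).le
    _ = Real.exp (((J:ℝ)+1) * (-(3:ℝ)) + (J:ℝ)/50) * Real.exp w := by
        rw [Real.exp_add]; ring
    _ ≤ Real.exp (-(2*(J:ℝ)+3)) * Real.exp w := by
        apply mul_le_mul_of_nonneg_right _ (Real.exp_pos _).le
        apply Real.exp_le_exp.2
        have : (0:ℝ) ≤ (J:ℝ) := Nat.cast_nonneg J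
        linarith

lemma sum_pow_div_factorial_le (c : ℝ) :
    ∀ J : ℕ, 0 ≤ c → 2*((J:ℝ)+1) ≤ c →
    ∑ j ∈ Finset.range (J+1), c ^ j / (Nat.factorial j : ℝ) ≤
      2 * c ^ J / (Nat.factorial J : ℝ) := by
  intro J
  induction J with
  | zero => intro _ _; simp [Nat.factorial]
  | succ J ih =>
    intro hc hJc
    have h2J : 2*((J:ℝ)+1) ≤ c := by push_cast at hJc ⊢; linarith
    have hfac : (0:ℝ) < (Nat.factorial J : ℝ) := by positivity
    have key : 2 * c ^ J / (Nat.factorial J : ℝ) ≤ c ^ (J+1) / (Nat.factorial (J+1) : ℝ) := by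
      rw [div_le_div_iff₀ (by positivity) (by positivity), Nat.factorial_succ, pow_succ]
      push_cast
      have hcJ : (0:ℝ) ≤ c ^ J := by positivity
      have h1 : 2*((J:ℝ)+1) * c ^ J ≤ c * c ^ J := mul_le_mul_of_nonneg_right h2J hcJ
      nlinarith [hfac, mul_le_mul_of_nonneg_right h1 hfac.le]
    rw [Finset.sum_range_succ]
    calc (∑ j ∈ Finset.range (J+1), c ^ j / (Nat.factorial j : ℝ))
          + c ^ (J+1) / (Nat.factorial (J+1) : ℝ)
        ≤ 2 * c ^ J / (Nat.factorial J : ℝ) + c ^ (J+1) / (Nat.factorial (J+1) : ℝ) := by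
          have := ih hc h2J
          linarith
      _ ≤ c ^ (J+1) / (Nat.factorial (J+1) : ℝ) + c ^ (J+1) / (Nat.factorial (J+1) : ℝ) := by
          linarith
      _ = 2 * c ^ (J+1) / (Nat.factorial (J+1) : ℝ) := by ring

set_option maxHeartbeats 1000000 in
/-- **Lemma 3.3**: if `|Re D_{m,ℓ}(t)| ∈ I_{n_m}^{(m)}`, then
`R_{m,ℓ}(t)^{1/(k-1)} ≤ (1 + C e^{-J_m}) U_{m,ℓ}(t)` for an absolute constant `C > 0`. -/
theorem Rml_rpow_le_Uml :
    ∃ C : ℝ, 0 < C ∧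
    ∀ k : ℝ, 2 < k →
    ∃ C₀min : ℝ, ∀ C₀ : ℝ, C₀min ≤ C₀ →
    ∃ T₀ : ℝ, ∀ T : ℝ, T₀ ≤ T →
    ∀ x y : ℝ, 2 ≤ x → x ≤ T ^ ((1:ℝ)/2) → y = x ^ (1 / C₀) →
    ∀ M : ℕ, 1 ≤ M → ∀ Y : ℕ → ℝ, ∀ J : ℕ → ℕ,
      Y 0 = 1 → Y M = y →
      (∀ m : ℕ, 2 ≤ m → m ≤ M → Y (m - 1) = Y m ^ ((1:ℝ)/20)) →
      y ^ (1 / (20 * Real.log (Real.log y) ^ 2)) ≤ Y 1 →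
      Y 1 ≤ y ^ (1 / Real.log (Real.log y) ^ 2) →
      (J 1 : ℝ) = Real.log (Real.log y) ^ ((3:ℝ)/2) →
      (J M : ℝ) = C₀ / (10 ^ 5 * k) →
      (∀ m : ℕ, 2 ≤ m → m ≤ M - 1 → (J m : ℝ) = (J M : ℝ) + (M : ℝ) - (m : ℝ)) →
      Real.exp (10 ^ 4 * k ^ 2) ≤ (J M : ℝ) →
      ∀ m : ℕ, 1 ≤ m → m ≤ M →
      ∀ l : ℤ, (|l| : ℝ) ≤ Real.log y / 2 →
      ∀ nm : ℕ, ∀ t : ℝ,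
        |(Dpoly y Y m l t).re| ∈ Iset k J m nm →
        Rml k y Y J m l t ^ ((1:ℝ) / (k - 1)) ≤
          (1 + C * Real.exp (-(J m : ℝ))) * Uml k y Y J m nm l t := by
  refine ⟨12, by norm_num, ?_⟩
  intro k hk
  refine ⟨0, fun C₀ hC₀ => ⟨0, fun T hT => ?_⟩⟩
  intro x y hx1 hx2 hy M hM Y J hY0 hYM hYm hY1a hY1b hJ1 hJM hJmm hJMe m hm1 hm2 l hl nm t hmem
  clear hx1 hx2 hy hM hY0 hYM hYm hY1a hY1b hJ1 hJM hJmm hJMe hm1 hm2 hl hC₀ hT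
  clear x T C₀ M
  have hκ : (1:ℝ) < k - 1 := by linarith
  have hκ0 : (0:ℝ) < k - 1 := by linarith
  have hk0 : (0:ℝ) < k := by linarith
  have hRpow : ∀ s : ℝ, (s^2) ^ ((1:ℝ)/(k-1)) = |s| ^ ((2:ℝ)/(k-1)) := by
    intro s
    rw [← sq_abs, ← Real.rpow_natCast |s| 2, ← Real.rpow_mul (abs_nonneg s)]
    congr 1
    push_cast
    ring
  have hJnn : (0:ℝ) ≤ (J m : ℝ) := Nat.cast_nonneg _
  set D : ℝ := (Dpoly y Y m l t).re with hDdef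
  set u : ℝ := Real.exp (-(J m : ℝ)) with hudef
  have hu0 : 0 < u := Real.exp_pos _
  have hu1 : u ≤ 1 := Real.exp_le_one_iff.2 (by linarith)
  by_cases hnm : nm = 0
  · -- case n_m = 0
    subst hnm
    simp only [Iset, if_pos rfl, Set.mem_Icc] at hmem
    obtain ⟨-, hDle⟩ := hmem
    simp only [Rml, Uml, if_pos rfl]
    rw [hRpow]
    set S1 : ℝ := ∑ j ∈ Finset.range (J m + 1), D ^ j / (Nat.factorial j : ℝ) with hS1def
    have hSeq : (∑ j ∈ Finset.range (J m + 1), (k-1)^j / (Nat.factorial j : ℝ) * D^j)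
        = ∑ j ∈ Finset.range (J m + 1), ((k-1)*D)^j / (Nat.factorial j : ℝ) := by
      refine Finset.sum_congr rfl fun j _ => ?_
      rw [mul_pow]; ring
    rw [hSeq]
    set Sk : ℝ := ∑ j ∈ Finset.range (J m + 1), ((k-1)*D)^j / (Nat.factorial j : ℝ) with hSkdef
    have hw1 : |(k-1)*D| ≤ (J m : ℝ)/100 := by
      rw [abs_mul, abs_of_pos hκ0]
      calc (k-1)*|D| ≤ (k-1) * ((J m : ℝ)/(100*k)) := mul_le_mul_of_nonneg_left hDle hκ0.le
        _ = (k-1)*(J m : ℝ)/(100*k) := by ring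
        _ ≤ (J m : ℝ)/100 := by
            rw [div_le_div_iff₀ (by positivity) (by norm_num)]
            nlinarith [hJnn]
    have hw2 : |D| ≤ (J m : ℝ)/100 := by
      refine le_trans hDle ?_
      rw [div_le_div_iff₀ (by positivity) (by norm_num)]
      nlinarith [hJnn]
    set ε : ℝ := Real.exp (-(2*(J m : ℝ)+3)) with hεdef
    have hε0 : 0 < ε := Real.exp_pos _
    have ht1 := tail_small (J m) ((k-1)*D) hw1
    have ht2 := tail_small (J m) D hw2
    set E : ℝ := Real.exp ((k-1)*D) with hEdef
    set E1 : ℝ := Real.exp D with hE1def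
    have hE0 : 0 < E := Real.exp_pos _
    have hE10 : 0 < E1 := Real.exp_pos _
    have hSkub : |Sk| ≤ (1+ε)*E := by
      have h := abs_sub_abs_le_abs_sub Sk E
      rw [abs_sub_comm] at h
      have hEabs : |E| = E := abs_of_pos hE0
      nlinarith [ht1]
    have hS1lb : (1-ε)*E1 ≤ S1 := by
      have h : E1 - S1 ≤ ε * E1 := le_trans (le_abs_self _) ht2
      nlinarith
    have hεu : 20 * ε ≤ u := by
      have : ε = u * Real.exp (-((J m : ℝ)+3)) := by
        rw [hεdef, hudef, ← Real.exp_add]; congr 1; ring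
      rw [this]
      have h1 : Real.exp (-((J m : ℝ)+3)) ≤ Real.exp (-(3:ℝ)) :=
        Real.exp_le_exp.2 (by linarith)
      have h2 : Real.exp (-(3:ℝ)) ≤ 1/20 := by
        have h9 : (2.7182818283:ℝ) < Real.exp 1 := Real.exp_one_gt_d9
        have h20 : (20:ℝ) ≤ Real.exp 3 := by
          rw [show (3:ℝ) = ((3:ℕ):ℝ) by norm_num, ← Real.exp_one_pow]
          have h3 : (2.7182818283:ℝ)^3 ≤ Real.exp 1 ^ 3 := pow_le_pow_left₀ (by norm_num) h9.le 3
          nlinarith [h3]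
        rw [Real.exp_neg, inv_eq_one_div]
        exact one_div_le_one_div_of_le (by norm_num) h20
      nlinarith [Real.exp_pos (-((J m : ℝ)+3)),
        mul_le_mul_of_nonneg_left (le_trans h1 h2) hu0.le]
    have hε20 : ε ≤ 1/20 := by linarith
    have hE2 : E ^ ((2:ℝ)/(k-1)) = E1^2 := by
      rw [hEdef, Real.rpow_def_of_pos (Real.exp_pos _), Real.log_exp, hE1def, sq, ← Real.exp_add]
      congr 1
      field_simp
      ring
    have hkey : (1+ε)^2 ≤ (1+12*u)*(1-ε)^2 := by
      nlinarith [mul_nonneg (by linarith : (0:ℝ) ≤ u - 20*ε) hε0.le,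
        mul_nonneg (by linarith : (0:ℝ) ≤ 1 - u) hε0.le, sq_nonneg ε]
    calc |Sk| ^ ((2:ℝ)/(k-1))
        ≤ ((1+ε)*E) ^ ((2:ℝ)/(k-1)) := by
          apply Real.rpow_le_rpow (abs_nonneg _) hSkub (by positivity)
      _ = (1+ε)^((2:ℝ)/(k-1)) * E^((2:ℝ)/(k-1)) := Real.mul_rpow (by positivity) hE0.le
      _ ≤ (1+ε)^(2:ℝ) * E^((2:ℝ)/(k-1)) := by
          apply mul_le_mul_of_nonneg_right _ (Real.rpow_nonneg hE0.le _)
          apply Real.rpow_le_rpow_of_exponent_le (by linarith)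
          rw [div_le_iff₀ hκ0]; nlinarith
      _ = (1+ε)^2 * E1^2 := by
          rw [hE2, show ((2:ℝ)) = ((2:ℕ):ℝ) by norm_num, Real.rpow_natCast]
      _ ≤ (1+12*u) * ((1-ε)*E1)^2 := by nlinarith [sq_nonneg E1, hkey, hE10]
      _ ≤ (1+12*u) * S1^2 := by
          apply mul_le_mul_of_nonneg_left _ (by positivity)
          apply pow_le_pow_left₀ (by nlinarith) hS1lb
  · -- case n_m ≥ 1
    simp only [Iset, if_neg hnm, Set.mem_Icc] at hmem
    set a : ℝ := 2^(nm-1) * (J m : ℝ)/(100*k) with hadef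
    have hb : (2:ℝ)^nm * (J m : ℝ)/(100*k) = 2*a := by
      have hsp : nm - 1 + 1 = nm := Nat.succ_pred_eq_of_pos (Nat.pos_of_ne_zero hnm)
      have h2 : (2:ℝ)^nm = 2 * 2^(nm-1) := by
        conv_lhs => rw [← hsp]
        rw [pow_succ]; ring
      rw [hadef, h2]; ring
    obtain ⟨hDlb, hDub⟩ := hmem
    rw [hb] at hDub
    have ha0 : 0 ≤ a := by positivity
    have hAeq : sInf (Iset k J m nm) = a := by
      simp only [Iset, if_neg hnm]
      exact csInf_Icc (by rw [hb]; nlinarith [abs_nonneg D, hDlb])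
    simp only [Rml, Uml, if_neg hnm, hAeq]
    rw [hRpow]
    set S : ℝ := ∑ j ∈ Finset.range (J m + 1), (k-1)^j / (Nat.factorial j : ℝ) * D^j with hSdef
    have hS_le : |S| ≤ ∑ j ∈ Finset.range (J m + 1), ((k-1)*|D|)^j / (Nat.factorial j : ℝ) := by
      refine (Finset.abs_sum_le_sum_abs _ _).trans (le_of_eq (Finset.sum_congr rfl fun j _ => ?_))
      rw [abs_mul, abs_div, abs_pow, abs_pow, abs_of_pos hκ0, Nat.abs_cast, mul_pow]
      ring
    have hP : 1 ≤ ‖Dpoly y Y m l t / (a:ℂ)‖ ^ (2*⌈200*k*(J m : ℝ)⌉₊) := by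
      rcases Nat.eq_zero_or_pos (J m) with hJ0 | hJ0
      · simp [hJ0]
      · have hJpos : (0:ℝ) < (J m : ℝ) := by exact_mod_cast hJ0
        have ha' : 0 < a := by rw [hadef]; positivity
        have h1 : 1 ≤ ‖Dpoly y Y m l t / (a:ℂ)‖ := by
          rw [norm_div, Complex.norm_real, Real.norm_eq_abs, abs_of_pos ha', le_div_iff₀ ha', one_mul]
          calc a ≤ |D| := hDlb
            _ ≤ ‖Dpoly y Y m l t‖ := Complex.abs_re_le_norm _
        calc (1:ℝ) = 1 ^ (2*⌈200*k*(J m : ℝ)⌉₊) := (one_pow _).symm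
          _ ≤ ‖Dpoly y Y m l t / (a:ℂ)‖ ^ (2*⌈200*k*(J m : ℝ)⌉₊) :=
            pow_le_pow_left₀ (by norm_num) h1 _
    have h1u : (1:ℝ) ≤ 1 + 12*u := by nlinarith
    by_cases hA : a ≤ 100*k*(J m : ℝ)
    · rw [if_pos hA]
      have hsum_le : ∑ j ∈ Finset.range (J m + 1), ((k-1)*|D|)^j / (Nat.factorial j : ℝ)
          ≤ Real.exp ((k-1)*(2*a)) := by
        calc ∑ j ∈ Finset.range (J m + 1), ((k-1)*|D|)^j / (Nat.factorial j : ℝ)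
            ≤ ∑ j ∈ Finset.range (J m + 1), ((k-1)*(2*a))^j / (Nat.factorial j : ℝ) := by
              apply Finset.sum_le_sum
              intro j _
              apply (div_le_div_iff_of_pos_right (by positivity)).2
              exact pow_le_pow_left₀ (by positivity) (mul_le_mul_of_nonneg_left hDub hκ0.le) j
          _ ≤ Real.exp ((k-1)*(2*a)) := Real.sum_le_exp_of_nonneg (by positivity) _
      have hexp4 : Real.exp ((k-1)*(2*a)) ^ ((2:ℝ)/(k-1)) = Real.exp (4*a) := by
        rw [Real.rpow_def_of_pos (Real.exp_pos _), Real.log_exp]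
        congr 1
        field_simp
        ring
      calc |S| ^ ((2:ℝ)/(k-1))
          ≤ Real.exp ((k-1)*(2*a)) ^ ((2:ℝ)/(k-1)) := by
            apply Real.rpow_le_rpow (abs_nonneg _) (le_trans hS_le hsum_le) (by positivity)
        _ = Real.exp (4*a) := hexp4
        _ = Real.exp (4*a) * 1 := (mul_one _).symm
        _ ≤ Real.exp (4*a) * ((1+12*u) * (‖Dpoly y Y m l t / (a:ℂ)‖ ^ (2*⌈200*k*(J m : ℝ)⌉₊))) := by
            apply mul_le_mul_of_nonneg_left _ (Real.exp_pos _).le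
            nlinarith [hP]
        _ = (1+12*u) * (Real.exp (4*a) * ‖Dpoly y Y m l t / (a:ℂ)‖ ^ (2*⌈200*k*(J m : ℝ)⌉₊)) := by
            ring
    · rw [if_neg hA]
      push_neg at hA
      have hJ1 : (1:ℝ) ≤ (J m : ℝ) := by
        rcases Nat.eq_zero_or_pos (J m) with h0 | h0
        · exfalso
          rw [hadef, h0] at hA
          simp at hA
        · exact_mod_cast h0
      have hJc : 2*((J m : ℝ)+1) ≤ (k-1)*|D| := by
        nlinarith [mul_le_mul_of_nonneg_left hDlb hκ0.le,
          mul_nonneg (by linarith : (0:ℝ) ≤ k - 2) ha0,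
          mul_nonneg (by linarith : (0:ℝ) ≤ k - 2) hJnn, hJnn]
      have hgeom := sum_pow_div_factorial_le ((k-1)*|D|) (J m) (by positivity) hJc
      have hmono : 2 * ((k-1)*|D|)^(J m) / (Nat.factorial (J m) : ℝ)
          ≤ 2 * (2*(k-1)*a)^(J m) / (Nat.factorial (J m) : ℝ) := by
        apply (div_le_div_iff_of_pos_right (by positivity)).2
        have : (k-1)*|D| ≤ 2*(k-1)*a := by nlinarith [mul_le_mul_of_nonneg_left hDub hκ0.le]
        nlinarith [pow_le_pow_left₀ (by positivity : (0:ℝ) ≤ (k-1)*|D|) this (J m)]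
      calc |S| ^ ((2:ℝ)/(k-1))
          ≤ (2 * (2*(k-1)*a)^(J m) / (Nat.factorial (J m) : ℝ)) ^ ((2:ℝ)/(k-1)) := by
            apply Real.rpow_le_rpow (abs_nonneg _)
              (le_trans hS_le (le_trans hgeom hmono)) (by positivity)
        _ = (2 * (2*(k-1)*a)^(J m) / (Nat.factorial (J m) : ℝ)) ^ ((2:ℝ)/(k-1)) * 1 := (mul_one _).symm
        _ ≤ (2 * (2*(k-1)*a)^(J m) / (Nat.factorial (J m) : ℝ)) ^ ((2:ℝ)/(k-1)) *
              ((1+12*u) * (‖Dpoly y Y m l t / (a:ℂ)‖ ^ (2*⌈200*k*(J m : ℝ)⌉₊))) := by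
            apply mul_le_mul_of_nonneg_left _ (Real.rpow_nonneg (by positivity) _)
            nlinarith [hP]
        _ = (1+12*u) * ((2 * (2*(k-1)*a)^(J m) / (Nat.factorial (J m) : ℝ)) ^ ((2:ℝ)/(k-1)) *
              ‖Dpoly y Y m l t / (a:ℂ)‖ ^ (2*⌈200*k*(J m : ℝ)⌉₊)) := by
            ring
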